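/- The sequence (a_k) defined by a_0 = u and a_{k+1} = s·Σ_{i=0}^{k} a_i·a_{k-i} (with u, s ≥ 0, u + s = 1) satisfies a_k = 2u(−4su)^k · binomial(1/2, k+1), equivalently a_k = u(4su)^k / ((k+1)·4^k) · binomial(2k, k). -/
import Mathlib


/-- Generalized binomial coefficient `binomial(r, k) = r(r-1)⋯(r-k+1)/k!`. -/
noncomputable def genBinom (r : ℝ) (k : ℕ) : ℝ :=
  (∏ i ∈ Finset.range k, (r - i)) / (Nat.factorial k)

lemma genBinom_succ (r : ℝ) (k : ℕ) :
    genBinom r (k + 1) = genBinom r k * (r - k) / (k + 1) := by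
  unfold genBinom
  rw [Finset.prod_range_succ, Nat.factorial_succ]
  push_cast
  rw [div_mul_eq_mul_div, div_div, mul_comm ((k:ℝ)+1)]

lemma catalan_succ_real (k : ℕ) :
    ((k : ℝ) + 2) * (catalan (k + 1) : ℝ) = 2 * (2 * k + 1) * (catalan k : ℝ) := by
  have h1 := succ_mul_catalan_eq_centralBinom (k + 1)
  have h2 := Nat.succ_mul_centralBinom_succ k
  have h3 := succ_mul_catalan_eq_centralBinom k
  have : (k + 1) * ((k + 1 + 1) * catalan (k + 1)) = (k + 1) * (2 * (2 * k + 1) * catalan k) := by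
    rw [h1, h2, ← h3]; ring
  have := Nat.eq_of_mul_eq_mul_left (Nat.succ_pos k) this
  exact_mod_cast this

lemma genBinom_half (k : ℕ) :
    genBinom (1/2) (k + 1) = (-1)^k * (catalan k : ℝ) / (2 * 4^k) := by
  induction k with
  | zero => simp [genBinom]
  | succ k ih =>
    rw [genBinom_succ, ih]
    have hk2 : ((k : ℝ) + 2) ≠ 0 := by positivity
    have h4 : (4 : ℝ)^k ≠ 0 := by positivity
    have hC : (catalan (k+1) : ℝ) = 2 * (2*k+1) * (catalan k : ℝ) / ((k:ℝ) + 2) := by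
      rw [eq_div_iff hk2]
      linarith [catalan_succ_real k]
    rw [hC]
    push_cast
    rw [pow_succ, pow_succ]
    field_simp
    ring

/-- The sequence a_0 = u, a_{k+1} = s·Σ_{i=0}^k a_i a_{k-i} has closed form
a_k = 2u(−4su)^k binomial(1/2, k+1) = u(4su)^k binomial(2k,k)/((k+1)4^k). -/
theorem stmt1 (u s : ℝ) (hu : 0 ≤ u) (hs : 0 ≤ s) (hus : u + s = 1)
    (a : ℕ → ℝ) (h0 : a 0 = u)
    (hrec : ∀ k, a (k + 1) = s * ∑ i ∈ Finset.range (k + 1), a i * a (k - i)) :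
    ∀ k, a k = 2 * u * (-(4 * s * u))^k * genBinom (1/2) (k + 1) ∧
      a k = u * (4 * s * u)^k / ((k + 1) * 4^k) * Nat.choose (2 * k) k := by
  have key : ∀ k, a k = u^(k+1) * s^k * (catalan k : ℝ) := by
    intro k
    induction k using Nat.strong_induction_on with
    | _ k ih =>
      match k with
      | 0 => simp [h0]
      | k + 1 =>
        rw [hrec k]
        have : ∀ i ∈ Finset.range (k + 1), a i * a (k - i)
            = u^(k+2) * s^k * ((catalan i : ℝ) * (catalan (k - i) : ℝ)) := by
          intro i hi
          have hik : i ≤ k := Nat.lt_succ_iff.mp (Finset.mem_range.mp hi)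
          rw [ih i (by omega), ih (k - i) (by omega)]
          rw [show k - i + 1 = k + 2 - (i + 1) by omega]
          rw [show u^(i+1) * s^i * (catalan i : ℝ) * (u^(k+2-(i+1)) * s^(k-i) * (catalan (k-i) : ℝ))
              = u^(i+1) * u^(k+2-(i+1)) * (s^i * s^(k-i)) * ((catalan i : ℝ) * (catalan (k-i) : ℝ)) by ring]
          rw [← pow_add, ← pow_add]
          have e1 : i + 1 + (k + 2 - (i + 1)) = k + 2 := by omega
          have e2 : i + (k - i) = k := by omega
          rw [e1, e2]
        rw [Finset.sum_congr rfl this, ← Finset.mul_sum]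
        have hcat : (catalan (k + 1) : ℝ) = ∑ i ∈ Finset.range (k + 1),
            (catalan i : ℝ) * (catalan (k - i) : ℝ) := by
          rw [catalan_succ k]
          push_cast
          rw [Finset.sum_range]
        rw [← hcat]
        ring
  intro k
  have hk1 : ((k : ℝ) + 1) ≠ 0 := by positivity
  have h4 : (4 : ℝ)^k ≠ 0 := by positivity
  have hcb : ((Nat.choose (2 * k) k : ℕ) : ℝ) = ((k : ℝ) + 1) * (catalan k : ℝ) := by
    have := succ_mul_catalan_eq_centralBinom k
    rw [Nat.centralBinom] at this
    exact_mod_cast this.symm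
  constructor
  · rw [key, genBinom_half]
    rw [show (-(4 * s * u)) = (-1) * (4 * s * u) by ring, mul_pow]
    field_simp
    ring_nf
    rw [show k * 2 = 2 * k by ring, pow_mul]
    norm_num
  · rw [key, hcb, mul_pow, mul_pow]
    field_simp
    ring
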